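/- The underlying simplicial complex of Δ' is not polytopal: there is no injective map f from the eighteen-element vertex set V = {e₁,e₂,e₃,e₄,d₁,d₂,d₃,d₄,c₁,…,c₁₀} into ℝ⁴ such that, setting P = convexHull(f(V)), the following two conditions hold: (i) for every nonempty set S contained in one of the fifty-five generator quadruples of Δ', the set convexHull(f(S)) is an extreme subset (face) of P; and (ii) every nonempty proper extreme subset of P equals convexHull(f(S)) for some nonempty set S contained in one of the fifty-five generator quadruples of Δ'. In other words, no 4-dimensional convex polytope has boundary complex combinatorially equivalent to the underlying simplicial complex of Δ'. -/

import Mathlib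

open Matrix

noncomputable section

def E1 : Fin 18 := 0
def E2 : Fin 18 := 1
def E3 : Fin 18 := 2
def E4 : Fin 18 := 3
def D1 : Fin 18 := 4
def D2 : Fin 18 := 5
def D3 : Fin 18 := 6
def D4 : Fin 18 := 7
def C1 : Fin 18 := 8
def C2 : Fin 18 := 9
def C3 : Fin 18 := 10
def C4 : Fin 18 := 11
def C5 : Fin 18 := 12
def C6 : Fin 18 := 13
def C7 : Fin 18 := 14
def C8 : Fin 18 := 15
def C9 : Fin 18 := 16
def C10 : Fin 18 := 17

def Qgen : Fin 55 → Finset (Fin 18) :=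
  ![{E1, E2, E3, E4},
    {D1, E2, E3, E4},
    {E1, D2, E3, E4},
    {E1, E2, D3, E4},
    {E1, E2, E3, D4},
    {D1, D2, E3, E4},
    {E1, D2, D3, E4},
    {D1, E2, D3, E4},
    {E1, D2, E3, D3},
    {E1, E2, D3, D1},
    {D1, E2, E3, D2},
    {E1, E2, D1, D4},
    {D2, E2, E3, D4},
    {D1, E2, D2, D4},
    {C1, D3, E3, D4},
    {E1, C1, E3, D4},
    {E1, D3, E3, C1},
    {C1, D1, D3, D4},
    {E1, D1, C1, D4},
    {E1, D1, D3, C1},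
    {C2, D2, E3, D4},
    {D3, C2, E3, D4},
    {C3, D2, C2, D4},
    {D3, C3, C2, D4},
    {D3, D2, C3, D4},
    {C3, D2, E3, C2},
    {D3, C3, E3, C2},
    {D3, D2, E3, C3},
    {C5, D2, D3, E4},
    {C4, C5, D3, E4},
    {C6, D2, C5, E4},
    {C4, C6, C5, E4},
    {C4, D2, C6, E4},
    {C6, D2, D3, C5},
    {C4, C6, D3, C5},
    {C4, D2, D3, C6},
    {C8, C4, D3, E4},
    {C7, C8, D3, E4},
    {C7, C4, C8, E4},
    {D1, C7, D3, E4},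
    {D1, C4, C7, E4},
    {D1, C8, D3, C7},
    {D1, C4, C8, C7},
    {D1, C4, D3, C8},
    {C9, D2, C4, E4},
    {C10, C9, C4, E4},
    {D1, C10, C4, E4},
    {D1, C9, C10, E4},
    {D1, D2, C9, E4},
    {C10, D2, C4, C9},
    {D1, D2, C10, C9},
    {D1, D2, C4, C10},
    {C4, D2, D3, D4},
    {D1, C4, D3, D4},
    {D1, D2, C4, D4}]

/-- `F` is an extreme subset (face) of the convex set `P`: `F` is convex,
`F ⊆ P`, and whenever a point of `F` lies in the open segment between two
points of `P`, both endpoints belong to `F`. -/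
def IsFace (P F : Set (Fin 4 → ℝ)) : Prop :=
  Convex ℝ F ∧ F ⊆ P ∧
    ∀ x ∈ P, ∀ y ∈ P, ∀ z ∈ F, z ∈ openSegment ℝ x y → x ∈ F ∧ y ∈ F



def det4 (r1 r2 r3 r4 : Fin 4 → ℝ) : ℝ :=
  r1 0*r2 1*r3 2*r4 3 - r1 0*r2 1*r3 3*r4 2 - r1 0*r2 2*r3 1*r4 3 + r1 0*r2 2*r3 3*r4 1 + r1 0*r2 3*r3 1*r4 2 - r1 0*r2 3*r3 2*r4 1 - r1 1*r2 0*r3 2*r4 3 + r1 1*r2 0*r3 3*r4 2 + r1 1*r2 2*r3 0*r4 3 - r1 1*r2 2*r3 3*r4 0 - r1 1*r2 3*r3 0*r4 2 + r1 1*r2 3*r3 2*r4 0 + r1 2*r2 0*r3 1*r4 3 - r1 2*r2 0*r3 3*r4 1 - r1 2*r2 1*r3 0*r4 3 + r1 2*r2 1*r3 3*r4 0 + r1 2*r2 3*r3 0*r4 1 - r1 2*r2 3*r3 1*r4 0 - r1 3*r2 0*r3 1*r4 2 + r1 3*r2 0*r3 2*r4 1 + r1 3*r2 1*r3 0*r4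 2 - r1 3*r2 1*r3 2*r4 0 - r1 3*r2 2*r3 0*r4 1 + r1 3*r2 2*r3 1*r4 0

lemma det4_eq_det (r1 r2 r3 r4 : Fin 4 → ℝ) :
    (Matrix.of ![r1, r2, r3, r4]).det = det4 r1 r2 r3 r4 := by
  simp [Matrix.det_succ_row_zero, Fin.sum_univ_succ, det4,
    show Fin.succAbove (2:Fin 4) (2:Fin 3) = 3 from rfl,
    show Fin.succAbove (1:Fin 4) (2:Fin 3) = 3 from rfl,
    show Fin.succ (2:Fin 3) = 3 from rfl,
    show Fin.castSucc (2:Fin 3) = 2 from rfl,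
    show Fin.succAbove (3:Fin 4) (2:Fin 3) = 2 from rfl,
    show Fin.succAbove (3:Fin 4) (1:Fin 3) = 1 from rfl,
    show Fin.succAbove (3:Fin 4) (0:Fin 3) = 0 from rfl]
  ring

lemma det4_lin (r1 r2 r3 x y : Fin 4 → ℝ) (s t : ℝ) :
    det4 r1 r2 r3 (s • x + t • y) = s * det4 r1 r2 r3 x + t * det4 r1 r2 r3 y := by
  simp [det4, Pi.add_apply, Pi.smul_apply, smul_eq_mul]
  ring

lemma comb_mem (x0 x1 x2 x3 : Fin 4 → ℝ) {a0 a1 a2 a3 : ℝ} (h0 : 0 ≤ a0) (h1 : 0 ≤ a1)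
    (h2 : 0 ≤ a2) (h3 : 0 ≤ a3) (hs : a0 + a1 + a2 + a3 = 1) :
    a0 • x0 + a1 • x1 + a2 • x2 + a3 • x3 ∈ convexHull ℝ ({x0, x1, x2, x3} : Set (Fin 4 → ℝ)) := by
  have hconv : Convex ℝ (convexHull ℝ ({x0, x1, x2, x3} : Set (Fin 4 → ℝ))) :=
    convex_convexHull ℝ _
  have := hconv.sum_mem (t := (Finset.univ : Finset (Fin 4))) (w := ![a0, a1, a2, a3])
    (z := ![x0, x1, x2, x3])
    (by intro i _; fin_cases i <;> simpa)
    (by simpa [Fin.sum_univ_four] using hs)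
    (by intro i _; apply subset_convexHull; fin_cases i <;> simp)
  simpa [Fin.sum_univ_four] using this
lemma absorb {P F : Set (Fin 4 → ℝ)} (hP : Convex ℝ P) (hF : IsFace P F)
    (X : Finset (Fin 4 → ℝ)) (hXP : ↑X ⊆ P) {p : Fin 4 → ℝ}
    (hpX : p ∈ convexHull ℝ (X : Set (Fin 4 → ℝ))) (hpF : p ∈ F) :
    ∃ x ∈ X, x ∈ F := by
  rw [Finset.convexHull_eq] at hpX
  obtain ⟨w, hw0, hw1, hwc⟩ := hpX
  have hex : ∃ y ∈ X, 0 < w y := by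
    by_contra h
    push_neg at h
    have : ∑ y ∈ X, w y = 0 :=
      Finset.sum_eq_zero fun y hy => le_antisymm (h y hy) (hw0 y hy)
    rw [hw1] at this; norm_num at this
  obtain ⟨y₀, hy₀X, hy₀⟩ := hex
  have hsum : w y₀ + ∑ y ∈ X.erase y₀, w y = 1 := by
    rw [Finset.add_sum_erase _ _ hy₀X]; exact hw1
  have hcm : p = ∑ y ∈ X, w y • y := by
    rw [← hwc, Finset.centerMass_eq_of_sum_1 _ _ hw1]; rfl
  by_cases h1 : w y₀ = 1
  · have hz : ∀ y ∈ X.erase y₀, w y = 0 := by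
      intro y hy
      have h0 : ∑ y ∈ X.erase y₀, w y = 0 := by rw [h1] at hsum; linarith
      have := Finset.sum_eq_zero_iff_of_nonneg
        (fun y hy => hw0 y (Finset.mem_of_mem_erase hy)) |>.mp h0
      exact this y hy
    have : p = y₀ := by
      rw [hcm, ← Finset.add_sum_erase _ _ hy₀X, h1, one_smul,
        Finset.sum_eq_zero (fun y hy => by rw [hz y hy, zero_smul]), add_zero]
    exact ⟨y₀, hy₀X, this ▸ hpF⟩
  · have hlt : w y₀ < 1 := by
      have h0 : 0 ≤ ∑ y ∈ X.erase y₀, w y :=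
        Finset.sum_nonneg fun y hy => hw0 y (Finset.mem_of_mem_erase hy)
      exact lt_of_le_of_ne (by linarith) h1
    set s := 1 - w y₀ with hs
    have hspos : 0 < s := by simp [hs]; linarith
    set q := s⁻¹ • ∑ y ∈ X.erase y₀, w y • y with hq
    have hqP : q ∈ P := by
      have hsum' : ∑ y ∈ X.erase y₀, w y = s := by rw [hs]; linarith
      have hqcm : q = (X.erase y₀).centerMass w id := by
        rw [Finset.centerMass, hsum', hq]; rfl
      rw [hqcm]
      refine convexHull_min hXP hP ?_
      exact Finset.centerMass_mem_convexHull _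
        (fun y hy => hw0 y (Finset.mem_of_mem_erase hy)) (hsum' ▸ hspos)
        (fun y hy => Finset.mem_coe.mpr (Finset.mem_of_mem_erase hy))
    have hpseg : p ∈ openSegment ℝ y₀ q := by
      refine ⟨w y₀, s, hy₀, hspos, by rw [hs]; ring, ?_⟩
      rw [hcm, ← Finset.add_sum_erase _ _ hy₀X, hq, smul_inv_smul₀ (ne_of_gt hspos)]
    have := hF.2.2 y₀ (hXP hy₀X) q hqP p hpF hpseg
    exact ⟨y₀, hy₀X, this.1⟩

def brk (p q r s t : Fin 4 → ℝ) : ℝ := det4 (q - p) (r - p) (s - p) (t - p)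

lemma gp4 (u v a b c d : Fin 4 → ℝ) :
    det4 u v a b * det4 u v c d - det4 u v a c * det4 u v b d
      + det4 u v a d * det4 u v b c = 0 := by
  simp only [det4]; ring

lemma brk_gp (p0 p1 p2 p3 p4 p5 p6 : Fin 4 → ℝ) :
    brk p0 p1 p2 p3 p4 * brk p0 p1 p2 p5 p6 - brk p0 p1 p2 p3 p5 * brk p0 p1 p2 p4 p6
      + brk p0 p1 p2 p3 p6 * brk p0 p1 p2 p4 p5 = 0 :=
  gp4 (p1 - p0) (p2 - p0) (p3 - p0) (p4 - p0) (p5 - p0) (p6 - p0)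

set_option maxHeartbeats 1000000 in
lemma certificate (p0 p1 p2 p3 p4 p5 p6 : Fin 4 → ℝ)
    (h0a : 0 < brk p0 p1 p2 p3 p4 * brk p0 p1 p2 p3 p5)
    (h0b : 0 < brk p0 p1 p2 p3 p4 * brk p0 p1 p2 p3 p6)
    (h8 : 0 < brk p0 p2 p5 p6 p1 * brk p0 p2 p5 p6 p3)
    (h6 : 0 < brk p0 p3 p5 p6 p2 * brk p0 p3 p5 p6 p1)
    (h3 : 0 < brk p0 p1 p3 p6 p5 * brk p0 p1 p3 p6 p4)
    (h9 : 0 < brk p0 p1 p4 p6 p3 * brk p0 p1 p4 p6 p2)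
    (h2 : 0 < brk p0 p2 p3 p5 p6 * brk p0 p2 p3 p5 p4)
    (h5 : 0 < brk p2 p3 p4 p5 p0 * brk p2 p3 p4 p5 p1)
    (h10 : 0 < brk p1 p2 p4 p5 p3 * brk p1 p2 p4 p5 p0) : False := by
  have hgp := brk_gp p0 p1 p2 p3 p4 p5 p6
  set c1 := brk p0 p1 p2 p3 p4 with hc1
  set c2 := brk p0 p1 p2 p5 p6 with hc2
  set c3 := brk p0 p1 p2 p3 p5 with hc3
  set c4 := brk p0 p1 p2 p4 p6 with hc4
  set c5 := brk p0 p1 p2 p3 p6 with hc5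
  set c6 := brk p0 p1 p2 p4 p5 with hc6
  set q1 := brk p0 p2 p3 p5 p6 with hq1
  set q2 := brk p0 p1 p3 p5 p6 with hq2
  set q3 := brk p0 p1 p3 p4 p6 with hq3
  set q4 := brk p0 p2 p3 p4 p5 with hq4
  set q5 := brk p1 p2 p3 p4 p5 with hq5
  have e8a : brk p0 p2 p5 p6 p1 = -c2 := by rw [hc2]; simp only [brk, det4, Pi.sub_apply]; ring
  have e8b : brk p0 p2 p5 p6 p3 = q1 := by rw [hq1]; simp only [brk, det4, Pi.sub_apply]; ring
  have e6a : brk p0 p3 p5 p6 p2 = -q1 := by rw [hq1]; simp only [brk, det4, Pi.sub_apply]; ring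
  have e6b : brk p0 p3 p5 p6 p1 = -q2 := by rw [hq2]; simp only [brk, det4, Pi.sub_apply]; ring
  have e3a : brk p0 p1 p3 p6 p5 = -q2 := by rw [hq2]; simp only [brk, det4, Pi.sub_apply]; ring
  have e3b : brk p0 p1 p3 p6 p4 = -q3 := by rw [hq3]; simp only [brk, det4, Pi.sub_apply]; ring
  have e9a : brk p0 p1 p4 p6 p3 = q3 := by rw [hq3]; simp only [brk, det4, Pi.sub_apply]; ring
  have e9b : brk p0 p1 p4 p6 p2 = c4 := by rw [hc4]; simp only [brk, det4, Pi.sub_apply]; ring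
  have e2b : brk p0 p2 p3 p5 p4 = -q4 := by rw [hq4]; simp only [brk, det4, Pi.sub_apply]; ring
  have e5a : brk p2 p3 p4 p5 p0 = q4 := by rw [hq4]; simp only [brk, det4, Pi.sub_apply]; ring
  have e5b : brk p2 p3 p4 p5 p1 = q5 := by rw [hq5]; simp only [brk, det4, Pi.sub_apply]; ring
  have e10a : brk p1 p2 p4 p5 p3 = q5 := by rw [hq5]; simp only [brk, det4, Pi.sub_apply]; ring
  have e10b : brk p1 p2 p4 p5 p0 = c6 := by rw [hc6]; simp only [brk, det4, Pi.sub_apply]; ring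
  rw [e8a, e8b] at h8
  rw [e6a, e6b] at h6
  rw [e3a, e3b] at h3
  rw [e9a, e9b] at h9
  rw [e2b] at h2
  rw [e5a, e5b] at h5
  rw [e10a, e10b] at h10
  -- h8 : 0 < -c2 * q1, h6 : 0 < -q1 * -q2, h3 : 0 < -q2 * -q3, h9 : 0 < q3*c4
  -- h2 : 0 < q1 * -q4, h5 : 0 < q4*q5, h10 : 0 < q5*c6
  have h24 : c2 * c4 < 0 := by
    have hp : 0 < (-c2 * q1) * ((-q1 * -q2) * ((-q2 * -q3) * (q3 * c4))) :=
      mul_pos h8 (mul_pos h6 (mul_pos h3 h9))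
    have he : (-c2 * q1) * ((-q1 * -q2) * ((-q2 * -q3) * (q3 * c4)))
        = -(c2 * c4) * (q1 * q2 * q3)^2 := by ring
    rw [he] at hp
    nlinarith [sq_nonneg (q1 * q2 * q3)]
  have h26 : 0 < c2 * c6 := by
    have hp : 0 < (-c2 * q1) * ((q1 * -q4) * ((q4 * q5) * (q5 * c6))) :=
      mul_pos h8 (mul_pos h2 (mul_pos h5 h10))
    have he : (-c2 * q1) * ((q1 * -q4) * ((q4 * q5) * (q5 * c6)))
        = (c2 * c6) * (q1 * q4 * q5)^2 := by ring
    rw [he] at hp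
    nlinarith [sq_nonneg (q1 * q4 * q5)]
  have key : (c1*c2)^2 - (c1*c3)*(c2*c4) + (c1*c5)*(c2*c6) = 0 := by
    linear_combination (c1 * c2) * hgp
  nlinarith [sq_nonneg (c1*c2), mul_pos h0b h26, mul_neg_of_pos_of_neg h0a h24]

set_option maxHeartbeats 4000000 in
/-- The underlying simplicial complex of Δ' is not polytopal: no injective
placement of the 18 vertices in ℝ⁴ realizes it as the boundary complex of a
convex polytope. -/
theorem delta_prime_not_polytopal :
    ¬ ∃ f : Fin 18 → (Fin 4 → ℝ), Function.Injective f ∧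
      (∀ S : Set (Fin 18), S.Nonempty → (∃ i : Fin 55, S ⊆ ↑(Qgen i)) →
        IsFace (convexHull ℝ (Set.range f)) (convexHull ℝ (f '' S))) ∧
      (∀ F : Set (Fin 4 → ℝ),
        IsFace (convexHull ℝ (Set.range f)) F → F.Nonempty →
        F ≠ convexHull ℝ (Set.range f) →
        ∃ S : Set (Fin 18), S.Nonempty ∧ (∃ i : Fin 55, S ⊆ ↑(Qgen i)) ∧
          F = convexHull ℝ (f '' S)) := by
  rintro ⟨f, hinj, hfaces, -⟩
  set P : Set (Fin 4 → ℝ) := convexHull ℝ (Set.range f) with hPdef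
  have hPconv : Convex ℝ P := convex_convexHull ℝ _
  have hrange : ∀ v, f v ∈ P := fun v => subset_convexHull ℝ _ ⟨v, rfl⟩
  have himg : ∀ S : Set (Fin 18), convexHull ℝ (f '' S) ⊆ P :=
    fun S => convexHull_mono (Set.image_subset_range f S)
  have hvertQ : ∀ v : Fin 18, ∃ i : Fin 55, v ∈ Qgen i := by set_option maxRecDepth 100000 in decide
  have hext : ∀ v : Fin 18, f v ∈ P.extremePoints ℝ := by
    intro v
    obtain ⟨i, hi⟩ := hvertQ v
    have hface := hfaces {v} ⟨v, rfl⟩ ⟨i, Set.singleton_subset_iff.mpr (Finset.mem_coe.mpr hi)⟩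
    rw [Set.image_singleton, convexHull_singleton] at hface
    rw [mem_extremePoints]
    refine ⟨hrange v, fun x1 h1 x2 h2 hseg => ?_⟩
    have h := hface.2.2 x1 h1 x2 h2 (f v) rfl hseg
    exact ⟨Set.mem_singleton_iff.mp h.1, Set.mem_singleton_iff.mp h.2⟩
  have hdetect : ∀ (S : Set (Fin 18)) (v : Fin 18), (∃ i : Fin 55, S ⊆ ↑(Qgen i)) →
      f v ∈ convexHull ℝ (f '' S) → v ∈ S := by
    intro S v hQ hv
    have hx : f v ∈ (convexHull ℝ (f '' S)).extremePoints ℝ := by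
      rw [mem_extremePoints]
      refine ⟨hv, fun x1 h1 x2 h2 hseg => ?_⟩
      exact (mem_extremePoints.mp (hext v)).2 x1 (himg S h1) x2 (himg S h2) hseg
    obtain ⟨u, hu, huv⟩ := extremePoints_convexHull_subset hx
    rwa [← hinj huv]
  have hlin : ∀ a b c d : Fin 18, Function.Injective ![a, b, c, d] →
      (∃ i : Fin 55, ({a, b, c, d} : Set (Fin 18)) ⊆ ↑(Qgen i)) →
      LinearIndependent ℝ ![f b - f a, f c - f a, f d - f a] := by
    intro a b c d hinj4 hQ
    by_contra hnli
    have haff : ¬ AffineIndependent ℝ (f ∘ ![a, b, c, d]) := by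
      intro haff
      apply hnli
      rw [affineIndependent_iff_linearIndependent_vsub ℝ _ 0] at haff
      have he : Function.Injective
          (fun i : Fin 3 => (⟨i.succ, Fin.succ_ne_zero i⟩ : {x : Fin 4 // x ≠ 0})) := by
        intro i j hij
        exact Fin.succ_injective _ (congrArg Subtype.val hij)
      have h2 := haff.comp _ he
      convert h2 using 1
      funext i
      fin_cases i <;> simp [vsub_eq_sub, Function.comp]
      all_goals rfl
    obtain ⟨I, p, hpI, hpIc⟩ := Convex.radon_partition haff
    set σ : Fin 4 → Fin 18 := ![a, b, c, d] with hσ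
    have hIne : I.Nonempty := by
      rcases Set.eq_empty_or_nonempty I with h | h
      · rw [h] at hpI; simp at hpI
      · exact h
    have hsub : ∀ J : Set (Fin 4), σ '' J ⊆ ({a, b, c, d} : Set (Fin 18)) := by
      rintro J x ⟨j, _, rfl⟩
      fin_cases j <;> simp [hσ]
    obtain ⟨i, hQi⟩ := hQ
    have hSQ : ∀ J : Set (Fin 4), σ '' J ⊆ ↑(Qgen i) := fun J => (hsub J).trans hQi
    have hface := hfaces (σ '' I) (hIne.image σ) ⟨i, hSQ I⟩
    rw [Set.image_comp] at hpI hpIc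
    have hfin : (σ '' Iᶜ).Finite := Set.toFinite _
    set X : Finset (Fin 4 → ℝ) := hfin.toFinset.image f with hX
    have hXcoe : (X : Set (Fin 4 → ℝ)) = f '' (σ '' Iᶜ) := by
      rw [hX, Finset.coe_image, Set.Finite.coe_toFinset]
    obtain ⟨x, hxX, hxF⟩ := absorb hPconv hface X
      (by rw [hXcoe]; exact (Set.image_subset_range f _).trans (subset_convexHull ℝ _))
      (by rw [hXcoe]; exact hpIc) hpI
    have hxmem : x ∈ f '' (σ '' Iᶜ) := by rw [← hXcoe]; exact Finset.mem_coe.mpr hxX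
    obtain ⟨u, hu, rfl⟩ := hxmem
    obtain ⟨k, hkIc, rfl⟩ := hu
    obtain ⟨j, hjI, hji⟩ := hdetect (σ '' I) (σ k) ⟨i, hSQ I⟩ hxF
    exact hkIc (hinj4 hji ▸ hjI)
  
  have hsub4 : ∀ (v1 v2 v3 v4 : Fin 18) (i : Fin 55), v1 ∈ Qgen i → v2 ∈ Qgen i →
      v3 ∈ Qgen i → v4 ∈ Qgen i → ({v1, v2, v3, v4} : Set (Fin 18)) ⊆ ↑(Qgen i) := by
    intro v1 v2 v3 v4 i h1 h2 h3 h4 x hx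
    simp only [Set.mem_insert_iff, Set.mem_singleton_iff] at hx
    rcases hx with rfl | rfl | rfl | rfl <;> exact Finset.mem_coe.mpr ‹_›
  have hnotin : ∀ u v1 v2 v3 v4 : Fin 18, u ≠ v1 → u ≠ v2 → u ≠ v3 → u ≠ v4 →
      u ∉ ({v1, v2, v3, v4} : Set (Fin 18)) := by
    intro u v1 v2 v3 v4 h1 h2 h3 h4 h
    simp only [Set.mem_insert_iff, Set.mem_singleton_iff] at h
    rcases h with h | h | h | h
    exacts [h1 h, h2 h, h3 h, h4 h]
  have hfs : ∀ a b c d y z : Fin 18, ∀ i : Fin 55,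
      Function.Injective ![a, b, c, d] →
      ({a, b, c, d} : Set (Fin 18)) ⊆ ↑(Qgen i) →
      y ∉ ({a, b, c, d} : Set (Fin 18)) → z ∉ ({a, b, c, d} : Set (Fin 18)) →
      0 < brk (f a) (f b) (f c) (f d) (f y) * brk (f a) (f b) (f c) (f d) (f z) := by
    intro a b c d y z i hinj4 hQi hy hz
    have hSne : ({a, b, c, d} : Set (Fin 18)).Nonempty := ⟨a, by simp⟩
    have hface := hfaces {a, b, c, d} hSne ⟨i, hQi⟩
    have hFP : convexHull ℝ (f '' ({a, b, c, d} : Set (Fin 18))) ⊆ P := himg _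
    have himgS : f '' ({a, b, c, d} : Set (Fin 18)) = {f a, f b, f c, f d} := by
      simp [Set.image_insert_eq]
    have hli : LinearIndependent ℝ ![f b - f a, f c - f a, f d - f a] :=
      hlin a b c d hinj4 ⟨i, hQi⟩
    have hwlem : ∀ w : Fin 4 → ℝ, w ∈ P →
        det4 (f b - f a) (f c - f a) (f d - f a) (w - f a) = 0 →
        w ∈ convexHull ℝ (f '' ({a, b, c, d} : Set (Fin 18))) := by
      intro w hwP hdet
      have hdet' : (Matrix.of ![f b - f a, f c - f a, f d - f a, w - f a]).det = 0 := by
        rw [det4_eq_det]; exact hdet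
      obtain ⟨v, hv0, hv⟩ := Matrix.exists_vecMul_eq_zero_iff.mpr hdet'
      have hcoord : ∀ j : Fin 4, v 0 * (f b j - f a j) + v 1 * (f c j - f a j)
          + v 2 * (f d j - f a j) + v 3 * (w j - f a j) = 0 := by
        intro j
        have h := congrFun hv j
        simpa [Matrix.vecMul, dotProduct, Fin.sum_univ_four] using h
      have hv3 : v 3 ≠ 0 := by
        intro h3
        have hz3 := Fintype.linearIndependent_iff.mp hli ![v 0, v 1, v 2] ?_
        · apply hv0
          funext i'
          fin_cases i'
          · exact hz3 0
          · exact hz3 1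
          · exact hz3 2
          · exact h3
        · funext j
          rw [Finset.sum_apply]
          have hc := hcoord j
          rw [h3] at hc
          simp only [Fin.sum_univ_three, Matrix.cons_val_zero, Matrix.cons_val_one,
            Matrix.head_cons, Matrix.cons_val_two, Matrix.tail_cons, Pi.smul_apply,
            Pi.sub_apply, smul_eq_mul, Pi.zero_apply]
          linarith
      set β : ℝ := -(v 0 / v 3) with hβ
      set γ : ℝ := -(v 1 / v 3) with hγ
      set δ : ℝ := -(v 2 / v 3) with hδ
      set l0 : ℝ := 1 - β - γ - δ with hl0
      have hcombo : ∀ j, w j = l0 * f a j + β * f b j + γ * f c j + δ * f d j := by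
        intro j
        have hc := hcoord j
        rw [hl0, hβ, hγ, hδ]
        field_simp
        ring_nf
        ring_nf at hc
        nlinarith [hc, sq_nonneg (v 3)]
      set T : ℝ := |l0| + |β| + |γ| + |δ| with hT
      set ε : ℝ := 1 / (4 * T + 1) with hε
      have hTnn : 0 ≤ T := by rw [hT]; positivity
      have h4T : (0 : ℝ) < 4 * T + 1 := by linarith
      have hεpos : 0 < ε := by rw [hε]; positivity
      have hεb : ε * (1/4 + T) ≤ 1/4 := by
        rw [hε, div_mul_eq_mul_div, one_mul, div_le_iff₀ h4T]
        ring_nf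
        linarith
      have hμ : ∀ l : ℝ, |l| ≤ T → 0 ≤ 1/4 + ε * (1/4 - l) := by
        intro l hl
        have h1 : ε * l ≤ ε * T :=
          mul_le_mul_of_nonneg_left (le_trans (le_abs_self l) hl) (le_of_lt hεpos)
        nlinarith
      have habs0 : |l0| ≤ T := by
        rw [hT]; linarith [abs_nonneg β, abs_nonneg γ, abs_nonneg δ]
      have habs1 : |β| ≤ T := by
        rw [hT]; linarith [abs_nonneg l0, abs_nonneg γ, abs_nonneg δ]
      have habs2 : |γ| ≤ T := by
        rw [hT]; linarith [abs_nonneg l0, abs_nonneg β, abs_nonneg δ]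
      have habs3 : |δ| ≤ T := by
        rw [hT]; linarith [abs_nonneg l0, abs_nonneg β, abs_nonneg γ]
      set zc : Fin 4 → ℝ := (1/4 : ℝ) • f a + (1/4 : ℝ) • f b + (1/4 : ℝ) • f c
        + (1/4 : ℝ) • f d with hzc
      set z' : Fin 4 → ℝ := (1/4 + ε * (1/4 - l0)) • f a + (1/4 + ε * (1/4 - β)) • f b
        + (1/4 + ε * (1/4 - γ)) • f c + (1/4 + ε * (1/4 - δ)) • f d with hz'
      have hzcF : zc ∈ convexHull ℝ (f '' ({a, b, c, d} : Set (Fin 18))) := by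
        rw [himgS, hzc]
        exact comb_mem _ _ _ _ (by norm_num) (by norm_num) (by norm_num) (by norm_num)
          (by norm_num)
      have hz'F : z' ∈ convexHull ℝ (f '' ({a, b, c, d} : Set (Fin 18))) := by
        rw [himgS, hz']
        refine comb_mem _ _ _ _ (hμ l0 habs0) (hμ β habs1) (hμ γ habs2) (hμ δ habs3) ?_
        rw [hl0]; ring
      have hseg : zc ∈ openSegment ℝ z' w := by
        refine ⟨1/(1+ε), ε/(1+ε), by positivity, by positivity, by field_simp, ?_⟩
        funext j
        have hc := hcombo j
        rw [hz', hzc]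
        simp only [Pi.add_apply, Pi.smul_apply, smul_eq_mul]
        rw [hc]
        field_simp
        ring
      have hw := hface.2.2 z' (hFP hz'F) w hwP zc hzcF hseg
      exact hw.2
    have hnz : ∀ u : Fin 18, u ∉ ({a, b, c, d} : Set (Fin 18)) →
        det4 (f b - f a) (f c - f a) (f d - f a) (f u - f a) ≠ 0 := by
      intro u hu h0
      exact hu (hdetect {a, b, c, d} u ⟨i, hQi⟩ (hwlem (f u) (hrange u) h0))
    have hkey : ∀ y1 z1 : Fin 18, y1 ∉ ({a, b, c, d} : Set (Fin 18)) →
        z1 ∉ ({a, b, c, d} : Set (Fin 18)) →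
        0 < det4 (f b - f a) (f c - f a) (f d - f a) (f y1 - f a) →
        det4 (f b - f a) (f c - f a) (f d - f a) (f z1 - f a) < 0 → False := by
      intro y1 z1 hy1 hz1 hpos hneg
      set Dy : ℝ := det4 (f b - f a) (f c - f a) (f d - f a) (f y1 - f a) with hDy
      set Dz : ℝ := det4 (f b - f a) (f c - f a) (f d - f a) (f z1 - f a) with hDz
      have hDyz : 0 < Dy - Dz := by linarith
      set t : ℝ := Dy / (Dy - Dz) with ht
      have ht0 : 0 < t := by rw [ht]; positivity
      have ht1 : t < 1 := by rw [ht, div_lt_one hDyz]; linarith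
      set w : Fin 4 → ℝ := (1 - t) • f y1 + t • f z1 with hw
      have hwa : w - f a = (1 - t) • (f y1 - f a) + t • (f z1 - f a) := by
        funext j
        simp only [hw, Pi.add_apply, Pi.sub_apply, Pi.smul_apply, smul_eq_mul]
        ring
      have hw0 : det4 (f b - f a) (f c - f a) (f d - f a) (w - f a) = 0 := by
        rw [hwa, det4_lin, ← hDy, ← hDz, ht]
        field_simp
        ring
      have hwP : w ∈ P := hPconv (hrange y1) (hrange z1) (by linarith) (le_of_lt ht0) (by ring)
      have hwF := hwlem w hwP hw0
      have hseg2 : w ∈ openSegment ℝ (f y1) (f z1) :=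
        ⟨1 - t, t, by linarith, ht0, by ring, rfl⟩
      have hin := hface.2.2 (f y1) (hrange y1) (f z1) (hrange z1) w hwF hseg2
      exact hy1 (hdetect {a, b, c, d} y1 ⟨i, hQi⟩ hin.1)
    show 0 < det4 (f b - f a) (f c - f a) (f d - f a) (f y - f a)
        * det4 (f b - f a) (f c - f a) (f d - f a) (f z - f a)
    rcases (hnz y hy).lt_or_gt with hy' | hy' <;> rcases (hnz z hz).lt_or_gt with hz' | hz'
    · exact mul_pos_of_neg_of_neg hy' hz'
    · exact (hkey z y hz hy hz' hy').elim
    · exact (hkey y z hy hz hy' hz').elim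
    · exact mul_pos hy' hz'
  exact certificate (f E1) (f E2) (f E3) (f E4) (f D1) (f D2) (f D3)
    (hfs E1 E2 E3 E4 D1 D2 0 (by decide)
      (hsub4 _ _ _ _ 0 (by decide) (by decide) (by decide) (by decide))
      (hnotin _ _ _ _ _ (by decide) (by decide) (by decide) (by decide))
      (hnotin _ _ _ _ _ (by decide) (by decide) (by decide) (by decide)))
    (hfs E1 E2 E3 E4 D1 D3 0 (by decide)
      (hsub4 _ _ _ _ 0 (by decide) (by decide) (by decide) (by decide))
      (hnotin _ _ _ _ _ (by decide) (by decide) (by decide) (by decide))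
      (hnotin _ _ _ _ _ (by decide) (by decide) (by decide) (by decide)))
    (hfs E1 E3 D2 D3 E2 E4 8 (by decide)
      (hsub4 _ _ _ _ 8 (by decide) (by decide) (by decide) (by decide))
      (hnotin _ _ _ _ _ (by decide) (by decide) (by decide) (by decide))
      (hnotin _ _ _ _ _ (by decide) (by decide) (by decide) (by decide)))
    (hfs E1 E4 D2 D3 E3 E2 6 (by decide)
      (hsub4 _ _ _ _ 6 (by decide) (by decide) (by decide) (by decide))
      (hnotin _ _ _ _ _ (by decide) (by decide) (by decide) (by decide))
      (hnotin _ _ _ _ _ (by decide) (by decide) (by decide) (by decide)))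
    (hfs E1 E2 E4 D3 D2 D1 3 (by decide)
      (hsub4 _ _ _ _ 3 (by decide) (by decide) (by decide) (by decide))
      (hnotin _ _ _ _ _ (by decide) (by decide) (by decide) (by decide))
      (hnotin _ _ _ _ _ (by decide) (by decide) (by decide) (by decide)))
    (hfs E1 E2 D1 D3 E4 E3 9 (by decide)
      (hsub4 _ _ _ _ 9 (by decide) (by decide) (by decide) (by decide))
      (hnotin _ _ _ _ _ (by decide) (by decide) (by decide) (by decide))
      (hnotin _ _ _ _ _ (by decide) (by decide) (by decide) (by decide)))
    (hfs E1 E3 E4 D2 D3 D1 2 (by decide)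
      (hsub4 _ _ _ _ 2 (by decide) (by decide) (by decide) (by decide))
      (hnotin _ _ _ _ _ (by decide) (by decide) (by decide) (by decide))
      (hnotin _ _ _ _ _ (by decide) (by decide) (by decide) (by decide)))
    (hfs E3 E4 D1 D2 E1 E2 5 (by decide)
      (hsub4 _ _ _ _ 5 (by decide) (by decide) (by decide) (by decide))
      (hnotin _ _ _ _ _ (by decide) (by decide) (by decide) (by decide))
      (hnotin _ _ _ _ _ (by decide) (by decide) (by decide) (by decide)))
    (hfs E2 E3 D1 D2 E4 E1 10 (by decide)
      (hsub4 _ _ _ _ 10 (by decide) (by decide) (by decide) (by decide))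
      (hnotin _ _ _ _ _ (by decide) (by decide) (by decide) (by decide))
      (hnotin _ _ _ _ _ (by decide) (by decide) (by decide) (by decide)))
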